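/- The Marabout failure detector is at least as strong as the perfect failure detector with respect to the solvability relation: ℳ ≽ˢ 𝒫, i.e., every time-free problem that is solvable using the perfect failure detector 𝒫 is also solvable using the Marabout failure detector ℳ. -/

import Mathlib

namespace FDT

open Classical

/-- A failure pattern: a monotone assignment of crashed sets to times. -/
structure FailurePattern (Proc : Type) where
  F : ℕ → Set Proc
  mono : ∀ t, F t ⊆ F (t + 1)

variable {Proc State Msg PState : Type}

/-- The set of processes live at time `t`. -/
def live (F : FailurePattern Proc) (t : ℕ) : Set Proc := (F.F t)ᶜ

/-- The set of correct processes: those that are always live. -/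
def correctS (F : FailurePattern Proc) : Set Proc := {p | ∀ t, p ∉ F.F t}

/-- The set of faulty processes. -/
def faultyS (F : FailurePattern Proc) : Set Proc := (correctS F)ᶜ

/-- Marabout failure detector: every live process always sees exactly the faulty set. -/
def Marabout (F : FailurePattern Proc) : Set (Proc → ℕ → Set Proc) :=
  {H | ∀ t : ℕ, ∀ p ∉ F.F t, H p t = faultyS F}

/-- The perfect failure detector: strong completeness and strong accuracy. -/
def Perfect (F : FailurePattern Proc) : Set (Proc → ℕ → Set Proc) :=
  {H | (∀ q ∈ faultyS F, ∀ p ∈ correctS F, ∃ t', ∀ t > t', q ∈ H p t) ∧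
       (∀ t : ℕ, ∀ p ∉ F.F t, ∀ q, q ∉ F.F t → q ∉ H p t)}

/-- The failure detector `𝒫_k`: k-completeness and k-accuracy. -/
def Pk (k : ℕ) (F : FailurePattern Proc) : Set (Proc → ℕ → Set Proc) :=
  {H | (∀ p q : Proc, q ∉ F.F k → q ∈ faultyS F → p ∈ correctS F →
          ∃ t', ∀ t > t', q ∈ H p t) ∧
       (∀ (p q : Proc) (t : ℕ), q ∉ F.F k → q ∉ F.F t → q ∉ H p t)}

/-- `F` is an initial crash scenario: all faulty processes crash at time 0. -/
def IsInitialCrashScenario (F : FailurePattern Proc) : Prop :=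
  ∀ t, F.F t = faultyS F

/-- The initial crash scenario `F⁰` associated with `F`. -/
def initialScenario (F : FailurePattern Proc) : FailurePattern Proc :=
  ⟨fun _ => faultyS F, fun _ => subset_rfl⟩

/-- The shifted failure pattern `t ↦ F(t+1)`. -/
def shiftPattern (F : FailurePattern Proc) : FailurePattern Proc :=
  ⟨fun t => F.F (t + 1), fun t => F.mono (t + 1)⟩

/-- A step `(p, s, m, d, s', m')` of process `p`. -/
structure Step (Proc State Msg : Type) where
  proc : Proc
  st : State
  recv : Option (Proc × Msg)
  fd : Set Proc
  st' : State
  send : Option (Proc × Msg)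

/-- An algorithm: state sets, nonempty initial state sets, and a deterministic
transition relation given as the set of allowed steps. -/
structure Algorithm (Proc State Msg : Type) where
  Q : Proc → Set State
  init : Proc → Set State
  init_sub : ∀ p, init p ⊆ Q p
  init_nonempty : ∀ p, (init p).Nonempty
  allowed : Set (Step Proc State Msg)
  allowed_st : ∀ s ∈ allowed, s.st ∈ Q s.proc ∧ s.st' ∈ Q s.proc
  det : ∀ s ∈ allowed, ∀ s' ∈ allowed,
    s.proc = s'.proc → s.st = s'.st → s.recv = s'.recv → s.fd = s'.fd →
    s.st' = s'.st' ∧ s.send = s'.send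

/-- `R = ⟨F, H, I, Φ, T⟩` is a valid run of algorithm `A` using failure detector `D`. -/
def ValidRun (A : Algorithm Proc State Msg)
    (D : FailurePattern Proc → Set (Proc → ℕ → Set Proc))
    (F : FailurePattern Proc) (H : Proc → ℕ → Set Proc) (I : Proc → State)
    (Φ : ℕ → Step Proc State Msg) (T : ℕ → ℕ) : Prop :=
  -- the time sequence is strictly increasing
  StrictMono T ∧
  -- the history belongs to the detector
  H ∈ D F ∧
  -- the initial configuration is made of initial states
  (∀ p, I p ∈ A.init p) ∧
  -- correct processes take infinitely many steps
  (∀ p ∈ correctS F, ∀ n : ℕ, ∃ ℓ ≥ n, (Φ ℓ).proc = p) ∧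
  -- all steps are allowed by the algorithm
  (∀ ℓ, Φ ℓ ∈ A.allowed) ∧
  -- a process taking a step is live at that time
  (∀ ℓ, (Φ ℓ).proc ∉ F.F (T ℓ)) ∧
  -- the failure detector output is the history value at that time
  (∀ ℓ, (Φ ℓ).fd = H (Φ ℓ).proc (T ℓ)) ∧
  -- no spurious messages
  (∀ ℓ q m, (Φ ℓ).recv = some (q, m) →
     ∃ k < ℓ, (Φ k).proc = q ∧ (Φ k).send = some ((Φ ℓ).proc, m)) ∧
  -- reliable links: each sent message received at most once; exactly once at correct processes
  (∀ ℓ q m, (Φ ℓ).send = some (q, m) →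
     (∀ k k', ℓ < k → ℓ < k' → (Φ k).proc = q → (Φ k).recv = some ((Φ ℓ).proc, m) →
        (Φ k').proc = q → (Φ k').recv = some ((Φ ℓ).proc, m) → k = k') ∧
     (q ∈ correctS F → ∃ k > ℓ, (Φ k).proc = q ∧ (Φ k).recv = some ((Φ ℓ).proc, m))) ∧
  -- the first step of a process starts in its initial state
  (∀ ℓ, (∀ k < ℓ, (Φ k).proc ≠ (Φ ℓ).proc) → (Φ ℓ).st = I (Φ ℓ).proc) ∧
  -- the state does not change between consecutive steps of a process
  (∀ ℓ k, ℓ < k → (Φ k).proc = (Φ ℓ).proc →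
     (∀ j, ℓ < j → j < k → (Φ j).proc ≠ (Φ ℓ).proc) → (Φ k).st = (Φ ℓ).st')

/-- `γ(I,Φ,ℓ)`: the configuration (process states) after the first `ℓ` steps of `Φ`. -/
noncomputable def configAt (I : Proc → State) (Φ : ℕ → Step Proc State Msg) :
    ℕ → Proc → State
  | 0 => I
  | (ℓ + 1) => fun p =>
      if (Φ ℓ).proc = p then (Φ ℓ).st' else configAt I Φ ℓ p

/-- `γ_i(I,Φ,ℓ)`: the state of process `p` after its first `ℓ` own steps in `Φ`
(constant once `p` takes no more steps). -/
noncomputable def procStateAfter (I : Proc → State) (Φ : ℕ → Step Proc State Msg)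
    (p : Proc) : ℕ → State
  | 0 => I p
  | (ℓ + 1) =>
      if h : ∃ k, (Φ k).proc = p ∧ {j | j < k ∧ (Φ j).proc = p}.ncard = ℓ
      then (Φ h.choose).st'
      else procStateAfter I Φ p ℓ

/-- `Φ, T` are obtained from `Φt, Tt` by deleting exactly the entries whose
process lies in `bad`. -/
def IsDeletion (bad : Set Proc) (Φt : ℕ → Step Proc State Msg) (Tt : ℕ → ℕ)
    (Φ : ℕ → Step Proc State Msg) (T : ℕ → ℕ) : Prop :=
  ∃ e : ℕ → ℕ, StrictMono e ∧
    (∀ ℓ, (Φt (e ℓ)).proc ∉ bad) ∧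
    (∀ n, (Φt n).proc ∉ bad → ∃ ℓ, e ℓ = n) ∧
    (∀ ℓ, Φ ℓ = Φt (e ℓ)) ∧ (∀ ℓ, T ℓ = Tt (e ℓ))

/-- Index `n` is the first step of its process in schedule `Φ`. -/
def IsFirstStep (Φ : ℕ → Step Proc State Msg) (n : ℕ) : Prop :=
  ∀ j < n, (Φ j).proc ≠ (Φ n).proc

/-- `Φ, T` are obtained from `Φt, Tt` by deleting, for each process, the entry of its
first step. -/
def IsFirstStepDeletion (Φt : ℕ → Step Proc State Msg) (Tt : ℕ → ℕ)
    (Φ : ℕ → Step Proc State Msg) (T : ℕ → ℕ) : Prop :=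
  ∃ e : ℕ → ℕ, StrictMono e ∧
    (∀ ℓ, ¬ IsFirstStep Φt (e ℓ)) ∧
    (∀ n, ¬ IsFirstStep Φt n → ∃ ℓ, e ℓ = n) ∧
    (∀ ℓ, Φ ℓ = Φt (e ℓ)) ∧ (∀ ℓ, T ℓ = Tt (e ℓ))

/-- Data for the Stall-on-Suspect transformation of `A`: the fresh stall states
`S†_i` (disjoint from `Q_i`) together with the bijections `stall_i : Q̂_i → S†_i`. -/
structure SoSData (A : Algorithm Proc State Msg) where
  Sd : Proc → Set State
  disj : ∀ p, Disjoint (Sd p) (A.Q p)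
  stall : Proc → State → State
  stall_maps : ∀ p, ∀ q ∈ A.init p, stall p q ∈ Sd p
  stall_inj : ∀ p, Set.InjOn (stall p) (A.init p)
  stall_surj : ∀ p, Sd p ⊆ stall p '' (A.init p)

/-- The Stall-on-Suspect transformation `Ã = 𝔉_SoS(A)`. -/
def SoSAlg (A : Algorithm Proc State Msg) (D : SoSData A) :
    Algorithm Proc State Msg where
  Q p := A.Q p ∪ D.Sd p
  init := A.init
  init_sub p := (A.init_sub p).trans Set.subset_union_left
  init_nonempty := A.init_nonempty
  allowed := {s | (s ∈ A.allowed ∧ ¬(s.st ∈ A.init s.proc ∧ s.proc ∈ s.fd)) ∨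
      (s.st ∈ A.init s.proc ∧ s.proc ∈ s.fd ∧ s.st' = D.stall s.proc s.st ∧
        s.recv = none ∧ s.send = none) ∨
      (s.st ∈ D.Sd s.proc ∧ s.st' = s.st ∧ s.recv = none ∧ s.send = none)}
  allowed_st := by
    rintro s (⟨hA, -⟩ | ⟨h1, h2, h3, -⟩ | ⟨h1, h2, -⟩)
    · exact ⟨Set.mem_union_left _ (A.allowed_st s hA).1,
        Set.mem_union_left _ (A.allowed_st s hA).2⟩
    · exact ⟨Set.mem_union_left _ (A.init_sub _ h1),
        Set.mem_union_right _ (h3 ▸ D.stall_maps _ _ h1)⟩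
    · exact ⟨Set.mem_union_right _ h1, Set.mem_union_right _ (h2 ▸ h1)⟩
  det := by
    rintro s hs s' hs' hproc hst hrecv hfd
    rcases hs with ⟨hA, hn⟩ | ⟨h1, h2, h3, h4, h5⟩ | ⟨h1, h2, h3, h4⟩ <;>
      rcases hs' with ⟨hA', hn'⟩ | ⟨h1', h2', h3', h4', h5'⟩ | ⟨h1', h2', h3', h4'⟩
    · exact A.det s hA s' hA' hproc hst hrecv hfd
    · exact absurd ⟨by rw [hproc, hst]; exact h1', by rw [hproc, hfd]; exact h2'⟩ hn
    · exact absurd ((A.allowed_st s hA).1)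
        (Set.disjoint_left.mp (D.disj s.proc) (by rw [hproc, hst]; exact h1'))
    · exact absurd ⟨by rw [← hproc, ← hst]; exact h1, by rw [← hproc, ← hfd]; exact h2⟩ hn'
    · refine ⟨?_, by rw [h5, h5']⟩
      rw [h3, h3', hproc, hst]
    · exact absurd (A.init_sub _ h1)
        (Set.disjoint_left.mp (D.disj s.proc) (by rw [hproc, hst]; exact h1'))
    · exact absurd ((A.allowed_st s' hA').1)
        (Set.disjoint_left.mp (D.disj s'.proc) (by rw [← hproc, ← hst]; exact h1))
    · exact absurd (A.init_sub _ h1')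
        (Set.disjoint_left.mp (D.disj s'.proc) (by rw [← hproc, ← hst]; exact h1))
    · exact ⟨by rw [h2, h2', hst], by rw [h4, h4']⟩

/-- Data for the Delay-a-Step transformation of `A`: fresh initial states `S⋆_i`
(disjoint from `Q_i`) together with the bijections `delay_i : S⋆_i → Q̂_i`. -/
structure DaSData (A : Algorithm Proc State Msg) where
  Ss : Proc → Set State
  disj : ∀ p, Disjoint (Ss p) (A.Q p)
  delay : Proc → State → State
  delay_maps : ∀ p, ∀ s ∈ Ss p, delay p s ∈ A.init p
  delay_inj : ∀ p, Set.InjOn (delay p) (Ss p)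
  delay_surj : ∀ p, A.init p ⊆ delay p '' (Ss p)

/-- The Delay-a-Step transformation `Ã = 𝔉_DaS(A)`. -/
def DaSAlg (A : Algorithm Proc State Msg) (D : DaSData A) :
    Algorithm Proc State Msg where
  Q p := A.Q p ∪ D.Ss p
  init p := D.Ss p
  init_sub p := Set.subset_union_right
  init_nonempty p := by
    obtain ⟨q, hq⟩ := A.init_nonempty p
    obtain ⟨s, hs, -⟩ := D.delay_surj p hq
    exact ⟨s, hs⟩
  allowed := {s | s ∈ A.allowed ∨
      (s.st ∈ D.Ss s.proc ∧ s.st' = D.delay s.proc s.st ∧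
        s.recv = none ∧ s.send = none)}
  allowed_st := by
    rintro s (hA | ⟨h1, h2, -⟩)
    · exact ⟨Set.mem_union_left _ (A.allowed_st s hA).1,
        Set.mem_union_left _ (A.allowed_st s hA).2⟩
    · exact ⟨Set.mem_union_right _ h1,
        Set.mem_union_left _ (A.init_sub _ (h2 ▸ D.delay_maps _ _ h1))⟩
  det := by
    rintro s hs s' hs' hproc hst hrecv hfd
    rcases hs with hA | ⟨h1, h2, h3, h4⟩ <;> rcases hs' with hA' | ⟨h1', h2', h3', h4'⟩
    · exact A.det s hA s' hA' hproc hst hrecv hfd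
    · exact absurd ((A.allowed_st s hA).1)
        (Set.disjoint_left.mp (D.disj s.proc) (by rw [hproc, hst]; exact h1'))
    · exact absurd ((A.allowed_st s' hA').1)
        (Set.disjoint_left.mp (D.disj s'.proc) (by rw [← hproc, ← hst]; exact h1))
    · exact ⟨by rw [h2, h2', hproc, hst], by rw [h4, h4']⟩

/-- One stuttering insertion: `w'` is obtained from `w` by inserting between the
`n`-th and `(n+1)`-st configurations a configuration agreeing componentwise with
one of the two. -/
def Stutter1 (w w' : ℕ → Proc → PState) : Prop :=
  ∃ n : ℕ, (∀ k ≤ n, w' k = w k) ∧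
    (∀ p, w' (n + 1) p = w n p ∨ w' (n + 1) p = w (n + 1) p) ∧
    (∀ k, n < k → w' (k + 1) = w k)

/-- `w ⊑ w'`: `w'` is obtained from `w` by finitely many stuttering insertions. -/
def Stutter (w w' : ℕ → Proc → PState) : Prop :=
  Relation.ReflTransGen Stutter1 w w'

/-- A time-free problem: a predicate on problem-configuration sequences and
failure patterns, satisfying crash time independence and finite stuttering. -/
structure TimeFreeProblem (Proc PState : Type) (initP : Set PState) where
  pred : (ℕ → Proc → PState) → FailurePattern Proc → Prop
  crashIndep : ∀ (w : ℕ → Proc → PState) (F F' : FailurePattern Proc),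
    (∀ p, w 0 p ∈ initP) → correctS F = correctS F' → (pred w F ↔ pred w F')
  stutterInv : ∀ (w w' : ℕ → Proc → PState) (F : FailurePattern Proc),
    (∀ p, w 0 p ∈ initP) → Stutter w w' → (pred w F ↔ pred w' F)

/-- `V` is an interpretation of the states of `A`: each `V_i` maps `Q_i` onto the
problem states, and `Q̂_i` onto the initial problem states `initP`. -/
def IsInterp (A : Algorithm Proc State Msg) (initP : Set PState)
    (V : Proc → State → PState) : Prop :=
  (∀ p, V p '' A.Q p = Set.univ) ∧ (∀ p, V p '' A.init p = initP)

/-- The interpreted run of a run with initial configuration `I` and schedule `Φ`. -/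
noncomputable def interpRun (V : Proc → State → PState) (I : Proc → State)
    (Φ : ℕ → Step Proc State Msg) : ℕ → Proc → PState :=
  fun ℓ p => V p (configAt I Φ ℓ p)

/-- Algorithm `A` solves problem `P` using failure detector `D`. -/
noncomputable def Solves (A : Algorithm Proc State Msg)
    (D : FailurePattern Proc → Set (Proc → ℕ → Set Proc))
    (P : (ℕ → Proc → PState) → FailurePattern Proc → Prop)
    (initP : Set PState) : Prop :=
  ∃ V : Proc → State → PState, IsInterp A initP V ∧
    ∀ (F : FailurePattern Proc) (H : Proc → ℕ → Set Proc) (I : Proc → State)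
      (Φ : ℕ → Step Proc State Msg) (T : ℕ → ℕ),
      ValidRun A D F H I Φ T → P (interpRun V I Φ) F

/-- Problem `P` is solvable using failure detector `D`. -/
noncomputable def SolvableWith (Proc : Type) {PState : Type}
    (D : FailurePattern Proc → Set (Proc → ℕ → Set Proc))
    (P : (ℕ → Proc → PState) → FailurePattern Proc → Prop)
    (initP : Set PState) : Prop :=
  ∃ (State Msg : Type) (A : Algorithm Proc State Msg), Solves A D P initP

/-- Problem states of strong consensus: an input value in `{0,1}` and a decision
in `{⊥,0,1}`. -/
abbrev SCState : Type := Bool × Option Bool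

/-- Initial problem states of strong consensus: no decision yet. -/
def SCinit : Set SCState := {s | s.2 = none}

/-- The strong-consensus predicate: inputs never change, decisions change at most
once and only from `⊥`, and all correct processes eventually forever decide the
input value of a single correct process (when a correct process exists). -/
def SCpred (w : ℕ → Proc → SCState) (F : FailurePattern Proc) : Prop :=
  (∀ (p : Proc) (ℓ : ℕ), (w ℓ p).1 = (w 0 p).1) ∧
  (∀ (p : Proc) (ℓ : ℕ), (w ℓ p).2 ≠ none → (w (ℓ + 1) p).2 = (w ℓ p).2) ∧
  ((correctS F).Nonempty →
    ∃ j ∈ correctS F, ∀ i ∈ correctS F, ∃ N, ∀ ℓ ≥ N, (w ℓ i).2 = some (w 0 j).1)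


section MaraboutAux

variable {Proc State Msg PState : Type}

lemma FailurePattern.mono_le (F : FailurePattern Proc) {s t : ℕ} (h : s ≤ t) :
    F.F s ⊆ F.F t := by
  induction t, h using Nat.le_induction with
  | base => exact subset_rfl
  | succ n hn ih => exact ih.trans (F.mono n)

lemma correctS_initialScenario (F : FailurePattern Proc) :
    correctS (initialScenario F) = correctS F := by
  ext p
  constructor
  · intro hp
    exact not_not.mp (hp 0)
  · intro hp t
    exact not_not.mpr hp

lemma faultyS_initialScenario (F : FailurePattern Proc) :
    faultyS (initialScenario F) = faultyS F := by
  unfold faultyS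
  rw [correctS_initialScenario]

lemma marabout_mem_perfect_initial (F : FailurePattern Proc) (H : Proc → ℕ → Set Proc)
    (hH : H ∈ Marabout F) : H ∈ Perfect (initialScenario F) := by
  constructor
  · intro q hq p hp
    rw [correctS_initialScenario] at hp
    rw [faultyS_initialScenario] at hq
    exact ⟨0, fun t _ => by rw [hH t p (hp t)]; exact hq⟩
  · intro t p hp q hq
    have hp' : p ∈ correctS F := not_not.mp hp
    rw [hH t p (hp' t)]
    exact hq

lemma configAt_succ (I : Proc → State) (Φ : ℕ → Step Proc State Msg) (n : ℕ) (p : Proc) :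
    configAt I Φ (n + 1) p = if (Φ n).proc = p then (Φ n).st' else configAt I Φ n p := rfl

lemma configAt_stable (I : Proc → State) (Φ : ℕ → Step Proc State Msg) (p : Proc)
    {m n : ℕ} (hmn : m ≤ n) (h : ∀ k, m ≤ k → k < n → (Φ k).proc ≠ p) :
    configAt I Φ n p = configAt I Φ m p := by
  induction n, hmn using Nat.le_induction with
  | base => rfl
  | succ n hn ih =>
    rw [configAt_succ, if_neg (h n hn (Nat.lt_succ_self n)),
      ih (fun k h1 h2 => h k h1 (h2.trans (Nat.lt_succ_self n)))]

lemma step_st_eq (I : Proc → State) (Φ : ℕ → Step Proc State Msg)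
    (h10 : ∀ ℓ, (∀ k < ℓ, (Φ k).proc ≠ (Φ ℓ).proc) → (Φ ℓ).st = I (Φ ℓ).proc)
    (h11 : ∀ ℓ k, ℓ < k → (Φ k).proc = (Φ ℓ).proc →
      (∀ j, ℓ < j → j < k → (Φ j).proc ≠ (Φ ℓ).proc) → (Φ k).st = (Φ ℓ).st')
    (n : ℕ) : (Φ n).st = configAt I Φ n (Φ n).proc := by
  classical
  by_cases hex : ∃ k, k < n ∧ (Φ k).proc = (Φ n).proc
  · set Pk : ℕ → Prop := fun k => k < n ∧ (Φ k).proc = (Φ n).proc with hPk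
    obtain ⟨k, hk⟩ := hex
    have hspec : Pk (Nat.findGreatest Pk n) :=
      Nat.findGreatest_spec (m := k) (le_of_lt hk.1) hk
    set k0 := Nat.findGreatest Pk n with hk0
    have hgr : ∀ j, k0 < j → j < n → (Φ j).proc ≠ (Φ n).proc := by
      intro j hj1 hj2 hj3
      exact Nat.findGreatest_is_greatest hj1 (le_of_lt hj2) ⟨hj2, hj3⟩
    have hst := h11 k0 n hspec.1 hspec.2.symm
      (by intro j hj1 hj2; rw [hspec.2]; exact hgr j hj1 hj2)
    rw [hst, configAt_stable I Φ _ (Nat.succ_le_of_lt hspec.1)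
      (fun j hj1 hj2 => hgr j (Nat.lt_of_succ_le hj1) hj2),
      configAt_succ, if_pos hspec.2]
  · push_neg at hex
    rw [h10 n (fun k hk => hex k hk), configAt_stable I Φ _ (Nat.zero_le n)
      (fun k _ hk => hex k hk)]
    rfl

lemma stutter_of_count (w : ℕ → Proc → PState) :
    ∀ (k : ℕ) (c : ℕ → ℕ), c 0 = 0 → (∀ n, c (n + 1) = c n + 1 ∨ c (n + 1) = c n) →
      {n | c (n + 1) = c n}.Finite → {n | c (n + 1) = c n}.ncard ≤ k →
      Stutter w (fun n => w (c n)) := by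
  intro k
  induction k with
  | zero =>
    intro c hc0 hstep hfin hcard
    have hempty : {n | c (n + 1) = c n} = ∅ :=
      (Set.ncard_eq_zero hfin).mp (Nat.le_zero.mp hcard)
    have hid : ∀ n, c n = n := by
      intro n
      induction n with
      | zero => exact hc0
      | succ n ih =>
        rcases hstep n with h | h
        · rw [h, ih]
        · exact absurd (Set.eq_empty_iff_forall_notMem.mp hempty n) (not_not.mpr h)
    have : (fun n => w (c n)) = w := funext fun n => by rw [hid]
    rw [this]
    exact Relation.ReflTransGen.refl
  | succ k ih =>
    intro c hc0 hstep hfin hcard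
    rcases Set.eq_empty_or_nonempty {n | c (n + 1) = c n} with hS | hS
    · exact ih c hc0 hstep hfin (by rw [(Set.ncard_eq_zero hfin).mpr hS]; exact Nat.zero_le k)
    · obtain ⟨m, hm, hmax⟩ : ∃ m ∈ {n | c (n + 1) = c n}, ∀ x ∈ {n | c (n + 1) = c n}, x ≤ m := by
        obtain ⟨m, hm, h2⟩ := Set.Finite.exists_maximal hfin hS
        exact ⟨m, hm, fun x hx => le_of_not_gt fun hl => hl.not_ge (h2 hx hl.le)⟩
      have hm' : c (m + 1) = c m := hm
      set c' : ℕ → ℕ := fun n => if n ≤ m then c n else c n + 1 with hc'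
      have hc'0 : c' 0 = 0 := by simp only [hc', if_pos (Nat.zero_le m), hc0]
      have hc'step : ∀ n, c' (n + 1) = c' n + 1 ∨ c' (n + 1) = c' n := by
        intro n
        by_cases h1 : n + 1 ≤ m
        · have h2 : n ≤ m := Nat.le_of_succ_le h1
          simp only [hc', if_pos h1, if_pos h2]
          exact hstep n
        · by_cases h2 : n ≤ m
          · have hnm : n = m := le_antisymm h2 (by omega)
            subst hnm
            left
            simp only [hc']
            rw [if_neg h1, if_pos h2, hm']
          · have hnS : c (n + 1) = c n + 1 :=
              (hstep n).resolve_right (fun hh => h2 (hmax n hh))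
            left
            simp only [hc', if_neg h1, if_neg h2, hnS]
      have hSset : {n | c' (n + 1) = c' n} = {n | c (n + 1) = c n} \ {m} := by
        ext n
        simp only [Set.mem_setOf_eq, Set.mem_diff, Set.mem_singleton_iff]
        by_cases h1 : n + 1 ≤ m
        · have h2 : n ≤ m := Nat.le_of_succ_le h1
          have hne : n ≠ m := by omega
          simp only [hc', if_pos h1, if_pos h2]
          exact ⟨fun h => ⟨h, hne⟩, fun h => h.1⟩
        · by_cases h2 : n ≤ m
          · have hnm : n = m := le_antisymm h2 (by omega)
            subst hnm
            constructor
            · intro h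
              have h' : c (n + 1) + 1 = c n := by
                simpa only [hc', if_neg h1, if_pos h2] using h
              omega
            · intro h
              exact absurd rfl h.2
          · have hnS : ¬ (c (n + 1) = c n) := fun hh => h2 (hmax n hh)
            simp only [hc', if_neg h1, if_neg h2]
            constructor
            · intro h; exact absurd (by omega : c (n + 1) = c n) hnS
            · intro h; exact absurd h.1 hnS
      have hfin' : {n | c' (n + 1) = c' n}.Finite := by
        rw [hSset]; exact hfin.diff
      have hcard' : {n | c' (n + 1) = c' n}.ncard ≤ k := by
        rw [hSset, Set.ncard_diff_singleton_of_mem hm]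
        have hpos := hS.ncard_pos hfin
        omega
      refine (ih c' hc'0 hc'step hfin' hcard').tail ?_
      refine ⟨m, ?_, ?_, ?_⟩
      · intro j hj
        simp only [hc', if_pos hj]
      · intro p
        left
        simp only [hc', if_pos (le_refl m), hm']
      · intro j hj
        have hj' : ¬ j ≤ m := not_le.mpr hj
        have hjS : c (j + 1) = c j + 1 :=
          (hstep j).resolve_right (fun hh => hj' (hmax j hh))
        simp only [hc', if_neg hj', hjS]

/-- Lift a step of the base algorithm to the sum state space. -/
def liftStep (s : Step Proc State Msg) : Step Proc (State ⊕ State) Msg :=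
  ⟨s.proc, Sum.inl s.st, s.recv, s.fd, Sum.inl s.st', s.send⟩

/-- Collapse the sum state space back. -/
def unSum : State ⊕ State → State := Sum.elim id id

/-- Map a step over the sum state space back to the base state space. -/
def backStep (s : Step Proc (State ⊕ State) Msg) : Step Proc State Msg :=
  ⟨s.proc, unSum s.st, s.recv, s.fd, unSum s.st', s.send⟩

@[simp] lemma backStep_liftStep (s : Step Proc State Msg) : backStep (liftStep s) = s := rfl

/-- The stall-on-suspect transformation of `A`, realized over the doubled state
space: `Sum.inr q` is the stall state attached to the initial state `q`. -/
def sosAlg (A : Algorithm Proc State Msg) : Algorithm Proc (State ⊕ State) Msg where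
  Q _ := Set.univ
  init p := Sum.inl '' A.init p
  init_sub _ := Set.subset_univ _
  init_nonempty p := (A.init_nonempty p).image _
  allowed := {s | (∃ a ∈ A.allowed, s = liftStep a ∧ ¬(a.st ∈ A.init a.proc ∧ a.proc ∈ a.fd)) ∨
      (∃ q ∈ A.init s.proc, s.st = Sum.inl q ∧ s.proc ∈ s.fd ∧ s.st' = Sum.inr q ∧
        s.recv = none ∧ s.send = none) ∨
      (∃ q ∈ A.init s.proc, s.st = Sum.inr q ∧ s.st' = Sum.inr q ∧
        s.recv = none ∧ s.send = none)}
  allowed_st _ _ := ⟨Set.mem_univ _, Set.mem_univ _⟩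
  det := by
    rintro s hs s' hs' hproc hst hrecv hfd
    rcases hs with ⟨a, ha, rfl, hna⟩ | ⟨q, hq, h1, h2, h3, h4, h5⟩ | ⟨q, hq, h1, h2, h3, h4⟩ <;>
      rcases hs' with ⟨a', ha', rfl, hna'⟩ | ⟨q', hq', h1', h2', h3', h4', h5'⟩ |
        ⟨q', hq', h1', h2', h3', h4'⟩
    · obtain ⟨e1, e2⟩ := A.det a ha a' ha' hproc (Sum.inl.inj hst) hrecv hfd
      exact ⟨congrArg Sum.inl e1, e2⟩
    · refine absurd ⟨?_, ?_⟩ hna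
      · rw [Sum.inl.inj (hst.trans h1'), show a.proc = s'.proc from hproc]
        exact hq'
      · rw [show a.proc = s'.proc from hproc, show a.fd = s'.fd from hfd]
        exact h2'
    · exact absurd (hst.trans h1') (by simp [liftStep])
    · refine absurd ⟨?_, ?_⟩ hna'
      · rw [Sum.inl.inj (hst.symm.trans h1), ← show s.proc = a'.proc from hproc]
        exact hq
      · rw [← show s.proc = a'.proc from hproc, ← show s.fd = a'.fd from hfd]
        exact h2
    · have hqq : q = q' := Sum.inl.inj (h1.symm.trans (hst.trans h1'))
      exact ⟨by rw [h3, h3', hqq], by rw [h5, h5']⟩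
    · exact absurd (h1.symm.trans (hst.trans h1')) (by simp)
    · exact absurd (h1.symm.trans hst) (by simp [liftStep])
    · exact absurd (h1.symm.trans (hst.trans h1')) (by simp)
    · have hqq : q = q' := Sum.inr.inj (h1.symm.trans (hst.trans h1'))
      exact ⟨by rw [h2, h2', hqq], by rw [h4, h4']⟩

end MaraboutAux

/-- `ℳ ≽ˢ 𝒫`: every time-free problem solvable using the perfect
detector `𝒫` is also solvable using the Marabout detector `ℳ`. -/
theorem marabout_solvability_stronger_than_perfect {Proc : Type} [Fintype Proc] [Nonempty Proc]
    (PState : Type) (initP : Set PState) (P : TimeFreeProblem Proc PState initP)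
    (h : SolvableWith Proc Perfect P.pred initP) :
    SolvableWith Proc Marabout P.pred initP := by
  classical
  obtain ⟨State, Msg, A, V, ⟨hVQ, hVinit⟩, hA⟩ := h
  refine ⟨State ⊕ State, Msg, sosAlg A, fun p s => V p (unSum s), ⟨?_, ?_⟩, ?_⟩
  · intro p
    rw [Set.eq_univ_iff_forall]
    intro y
    have hy : y ∈ V p '' A.Q p := by rw [hVQ p]; trivial
    obtain ⟨x, hx, hxy⟩ := hy
    exact ⟨Sum.inl x, trivial, hxy⟩
  · intro p
    rw [show (sosAlg A).init p = Sum.inl '' A.init p from rfl, Set.image_image]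
    simpa [unSum] using hVinit p
  intro F H I Φ T hrun
  obtain ⟨hT, hH, hI, hInf, hAll, hLive, hFd, hSpur, hRel, hFirst, hCons⟩ := hrun
  -- decompose the initial configuration
  have hI' : ∀ p, ∃ q, q ∈ A.init p ∧ Sum.inl q = I p := fun p => hI p
  choose I0 hI0mem hI0eq using hI'
  -- the failure detector always outputs the faulty set
  have hMar : ∀ ℓ, (Φ ℓ).fd = faultyS F :=
    fun ℓ => (hFd ℓ).trans (hH (T ℓ) (Φ ℓ).proc (hLive ℓ))
  -- eventually only correct processes take steps
  have hstop : ∀ p : Proc, ∃ t, p ∉ correctS F → p ∈ F.F t := by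
    intro p
    by_cases hp : p ∈ correctS F
    · exact ⟨0, fun hc => absurd hp hc⟩
    · have hex : ∃ t, p ∈ F.F t := by
        by_contra hcon
        push_neg at hcon
        exact hp hcon
      obtain ⟨t, ht⟩ := hex
      exact ⟨t, fun _ => ht⟩
  choose tb htb using hstop
  have hkeptN : ∀ n, Finset.univ.sup tb ≤ n → (Φ n).proc ∈ correctS F := by
    intro n hn
    by_contra hc
    have h1 : (Φ n).proc ∈ F.F (tb (Φ n).proc) := htb _ hc
    have h2 : tb (Φ n).proc ≤ T n :=
      le_trans (Finset.le_sup (Finset.mem_univ _)) (le_trans hn hT.le_apply)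
    exact hLive n (F.mono_le h2 h1)
  set kept : ℕ → Prop := fun n => (Φ n).proc ∈ correctS F with hkeptdef
  have hkinf : (setOf kept).Infinite :=
    (Set.Ici_infinite (Finset.univ.sup tb)).mono (fun n hn => hkeptN n hn)
  set e : ℕ → ℕ := Nat.nth kept with he
  have hemono : StrictMono e := Nat.nth_strictMono hkinf
  have hek : ∀ ℓ, (Φ (e ℓ)).proc ∈ correctS F := fun ℓ => Nat.nth_mem_of_infinite hkinf ℓ
  have hesurj : ∀ n, (Φ n).proc ∈ correctS F → ∃ ℓ, e ℓ = n :=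
    fun n hn => ⟨Nat.count kept n, Nat.nth_count hn⟩
  -- state tracking
  have hstq : ∀ n, (Φ n).st = configAt I Φ n (Φ n).proc := step_st_eq I Φ hFirst hCons
  -- faulty steps stall
  have hfstep : ∀ n, (Φ n).proc ∉ correctS F →
      (configAt I Φ n (Φ n).proc = Sum.inl (I0 (Φ n).proc) ∨
        configAt I Φ n (Φ n).proc = Sum.inr (I0 (Φ n).proc)) →
      (Φ n).st' = Sum.inr (I0 (Φ n).proc) ∧ (Φ n).send = none := by
    intro n hnc hcfg
    have hfdn : (Φ n).proc ∈ (Φ n).fd := by rw [hMar n]; exact hnc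
    have hst : (Φ n).st = Sum.inl (I0 (Φ n).proc) ∨ (Φ n).st = Sum.inr (I0 (Φ n).proc) := by
      rw [hstq n]; exact hcfg
    rcases hAll n with ⟨a, ha, heq, hna⟩ | ⟨q, hq, h1, h2, h3, h4, h5⟩ | ⟨q, hq, h1, h2, h3, h4⟩
    · exfalso
      have hp : (Φ n).proc = a.proc := by rw [heq]; rfl
      have hstn : (Φ n).st = Sum.inl a.st := by rw [heq]; rfl
      have hfdn2 : (Φ n).fd = a.fd := by rw [heq]; rfl
      rcases hst with hst | hst
      · refine hna ⟨?_, ?_⟩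
        · rw [Sum.inl.inj (hstn.symm.trans hst), ← hp]
          exact hI0mem _
        · rw [← hp, ← hfdn2]
          exact hfdn
      · exact absurd (hstn.symm.trans hst) (by simp)
    · have hq0 : q = I0 (Φ n).proc := by
        rcases hst with hst | hst
        · exact Sum.inl.inj (h1.symm.trans hst)
        · exact absurd (h1.symm.trans hst) (by simp)
      exact ⟨by rw [h3, hq0], h5⟩
    · have hq0 : q = I0 (Φ n).proc := by
        rcases hst with hst | hst
        · exact absurd (h1.symm.trans hst) (by simp)
        · exact Sum.inr.inj (h1.symm.trans hst)
      exact ⟨by rw [h2, hq0], h4⟩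
  have hinv : ∀ n, ∀ r, r ∉ correctS F →
      configAt I Φ n r = Sum.inl (I0 r) ∨ configAt I Φ n r = Sum.inr (I0 r) := by
    intro n
    induction n with
    | zero => intro r _; left; exact (hI0eq r).symm
    | succ n ih =>
      intro r hr
      by_cases hpr : (Φ n).proc = r
      · rw [configAt_succ, if_pos hpr]
        right
        have h1 : (Φ n).proc ∉ correctS F := by rw [hpr]; exact hr
        have h2 := ih r hr
        rw [← hpr] at h2
        rw [← hpr]
        exact (hfstep n h1 h2).1
      · rw [configAt_succ, if_neg hpr]
        exact ih r hr
  have hfstep' : ∀ n, (Φ n).proc ∉ correctS F →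
      (Φ n).st' = Sum.inr (I0 (Φ n).proc) ∧ (Φ n).send = none :=
    fun n hn => hfstep n hn (hinv n _ hn)
  -- correct steps follow `A`
  have hkstep : ∀ n, (Φ n).proc ∈ correctS F →
      (∃ q, configAt I Φ n (Φ n).proc = Sum.inl q) →
      ∃ a ∈ A.allowed, Φ n = liftStep a := by
    intro n hnc hq0
    obtain ⟨q0, hq0⟩ := hq0
    rcases hAll n with ⟨a, ha, heq, _⟩ | ⟨q, hq, h1, h2, h3, h4, h5⟩ | ⟨q, hq, h1, h2, h3, h4⟩
    · exact ⟨a, ha, heq⟩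
    · rw [hMar n] at h2
      exact absurd hnc h2
    · exfalso
      rw [hstq n, hq0] at h1
      simp at h1
  have hinv2 : ∀ n, ∀ p, p ∈ correctS F → ∃ q, configAt I Φ n p = Sum.inl q := by
    intro n
    induction n with
    | zero => intro p _; exact ⟨I0 p, (hI0eq p).symm⟩
    | succ n ih =>
      intro p hp
      by_cases hpr : (Φ n).proc = p
      · rw [configAt_succ, if_pos hpr]
        obtain ⟨a, ha, heq⟩ := hkstep n (by rw [hpr]; exact hp) (by rw [hpr]; exact ih p hp)
        exact ⟨a.st', by rw [heq]; rfl⟩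
      · rw [configAt_succ, if_neg hpr]
        exact ih p hp
  have hkbranch : ∀ n, (Φ n).proc ∈ correctS F → ∃ a ∈ A.allowed, Φ n = liftStep a :=
    fun n hn => hkstep n hn (hinv2 n _ hn)
  -- the deleted run is a valid run of `A` using `Perfect` with the initial scenario
  have hrun' : ValidRun A Perfect (initialScenario F) H (fun p => I0 p)
      (fun ℓ => backStep (Φ (e ℓ))) (fun ℓ => T (e ℓ)) := by
    refine ⟨hT.comp hemono, marabout_mem_perfect_initial F H hH, fun p => hI0mem p,
      ?_, ?_, ?_, ?_, ?_, ?_, ?_, ?_⟩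
    · -- correct processes take infinitely many steps
      intro p hp n
      rw [correctS_initialScenario] at hp
      obtain ⟨k, hk1, hk2⟩ := hInf p hp (e n)
      obtain ⟨ℓ, hℓ⟩ := hesurj k (by rw [hk2]; exact hp)
      refine ⟨ℓ, ?_, ?_⟩
      · by_contra hlt
        push_neg at hlt
        have := hemono hlt
        rw [hℓ] at this
        omega
      · show (Φ (e ℓ)).proc = p
        rw [hℓ]
        exact hk2
    · -- allowed by A
      intro ℓ
      obtain ⟨a, ha, heq⟩ := hkbranch (e ℓ) (hek ℓ)
      show backStep (Φ (e ℓ)) ∈ A.allowed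
      rw [heq, backStep_liftStep]
      exact ha
    · -- live at step times
      intro ℓ
      exact fun hc => hc (hek ℓ)
    · -- detector values
      intro ℓ
      exact hFd (e ℓ)
    · -- no spurious messages
      intro ℓ q m hrecv
      obtain ⟨k, hk, hkp, hks⟩ := hSpur (e ℓ) q m hrecv
      have hkc : (Φ k).proc ∈ correctS F := by
        by_contra hc
        rw [(hfstep' k hc).2] at hks
        cases hks
      obtain ⟨j, hj⟩ := hesurj k hkc
      have hjl : j < ℓ := hemono.lt_iff_lt.mp (by rw [hj]; exact hk)
      refine ⟨j, hjl, ?_, ?_⟩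
      · show (Φ (e j)).proc = q
        rw [hj]
        exact hkp
      · show (Φ (e j)).send = some ((Φ (e ℓ)).proc, m)
        rw [hj]
        exact hks
    · -- reliable links
      intro ℓ q m hsend
      obtain ⟨huniq, hdel⟩ := hRel (e ℓ) q m hsend
      constructor
      · intro k k' hk hk' hp1 hr1 hp2 hr2
        exact hemono.injective
          (huniq (e k) (e k') (hemono hk) (hemono hk') hp1 hr1 hp2 hr2)
      · intro hq
        rw [correctS_initialScenario] at hq
        obtain ⟨k, hk, hkp, hkr⟩ := hdel hq
        obtain ⟨j, hj⟩ := hesurj k (by rw [hkp]; exact hq)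
        have hjl : ℓ < j := hemono.lt_iff_lt.mp (by rw [hj]; exact hk)
        refine ⟨j, hjl, ?_, ?_⟩
        · show (Φ (e j)).proc = q
          rw [hj]
          exact hkp
        · show (Φ (e j)).recv = some ((Φ (e ℓ)).proc, m)
          rw [hj]
          exact hkr
    · -- first steps start from the initial configuration
      intro ℓ hfirst
      have hnone : ∀ k < e ℓ, (Φ k).proc ≠ (Φ (e ℓ)).proc := by
        intro k hk hkeq
        obtain ⟨j, hj⟩ := hesurj k (by rw [hkeq]; exact hek ℓ)
        have hjl : j < ℓ := hemono.lt_iff_lt.mp (by rw [hj]; exact hk)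
        refine hfirst j hjl ?_
        show (Φ (e j)).proc = (Φ (e ℓ)).proc
        rw [hj]
        exact hkeq
      have hst := hFirst (e ℓ) hnone
      show unSum (Φ (e ℓ)).st = I0 (Φ (e ℓ)).proc
      rw [hst, ← hI0eq (Φ (e ℓ)).proc]
      rfl
    · -- states persist between consecutive steps
      intro ℓ k hlk hpk hgap
      have hgap' : ∀ j, e ℓ < j → j < e k → (Φ j).proc ≠ (Φ (e ℓ)).proc := by
        intro j hj1 hj2 hjeq
        obtain ⟨i, hi⟩ := hesurj j (by rw [hjeq]; exact hek ℓ)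
        have h1 : ℓ < i := hemono.lt_iff_lt.mp (by rw [hi]; exact hj1)
        have h2 : i < k := hemono.lt_iff_lt.mp (by rw [hi]; exact hj2)
        refine hgap i h1 h2 ?_
        show (Φ (e i)).proc = (Φ (e ℓ)).proc
        rw [hi]
        exact hjeq
      have hst := hCons (e ℓ) (e k) (hemono hlk) hpk hgap'
      show unSum (Φ (e k)).st = unSum (Φ (e ℓ)).st'
      rw [hst]
  have hP0 := hA (initialScenario F) H (fun p => I0 p)
    (fun ℓ => backStep (Φ (e ℓ))) (fun ℓ => T (e ℓ)) hrun'
  have hw0 : ∀ p, interpRun V (fun p => I0 p) (fun ℓ => backStep (Φ (e ℓ))) 0 p ∈ initP := by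
    intro p
    show V p (I0 p) ∈ initP
    rw [← hVinit p]
    exact Set.mem_image_of_mem _ (hI0mem p)
  have hPF : P.pred (interpRun V (fun p => I0 p) (fun ℓ => backStep (Φ (e ℓ)))) F :=
    (P.crashIndep _ (initialScenario F) F hw0 (correctS_initialScenario F)).mp hP0
  -- the full interpreted run is a stutter of the deleted one
  have hcmain : ∀ n p, V p (unSum (configAt I Φ n p)) =
      V p (configAt (fun p => I0 p) (fun ℓ => backStep (Φ (e ℓ))) (Nat.count kept n) p) := by
    intro n
    induction n with
    | zero =>
      intro p
      rw [Nat.count_zero]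
      show V p (unSum (I p)) = V p (I0 p)
      rw [← hI0eq p]
      rfl
    | succ n ih =>
      intro p
      by_cases hk : kept n
      · have hcount : Nat.count kept (n + 1) = Nat.count kept n + 1 := by
          rw [Nat.count_succ, if_pos hk]
        have hen : e (Nat.count kept n) = n := Nat.nth_count hk
        rw [hcount, configAt_succ, configAt_succ]
        by_cases hpr : (Φ n).proc = p
        · rw [if_pos hpr,
            if_pos (show (backStep (Φ (e (Nat.count kept n)))).proc = p by rw [hen]; exact hpr)]
          show V p (unSum (Φ n).st') = V p (unSum (Φ (e (Nat.count kept n))).st')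
          rw [hen]
        · rw [if_neg hpr,
            if_neg (show ¬(backStep (Φ (e (Nat.count kept n)))).proc = p by rw [hen]; exact hpr)]
          exact ih p
      · have hcount : Nat.count kept (n + 1) = Nat.count kept n := by
          rw [Nat.count_succ, if_neg hk, add_zero]
        rw [hcount, configAt_succ]
        by_cases hpr : (Φ n).proc = p
        · rw [if_pos hpr]
          have h1 := (hfstep' n hk).1
          have h2 := hinv n p (by rw [← hpr]; exact hk)
          have hL : V p (unSum (Φ n).st') = V p (unSum (configAt I Φ n p)) := by
            rw [h1, hpr]
            rcases h2 with h2 | h2 <;> rw [h2] <;> rfl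
          rw [hL]
          exact ih p
        · rw [if_neg hpr]
          exact ih p
  have hstepdisj : ∀ n, Nat.count kept (n + 1) = Nat.count kept n + 1 ∨
      Nat.count kept (n + 1) = Nat.count kept n := by
    intro n
    by_cases hk : kept n
    · left; rw [Nat.count_succ, if_pos hk]
    · right; rw [Nat.count_succ, if_neg hk, add_zero]
  have hstallfin : {n | Nat.count kept (n + 1) = Nat.count kept n}.Finite := by
    refine (Set.finite_Iio (Finset.univ.sup tb)).subset ?_
    intro n hn
    simp only [Set.mem_Iio]
    by_contra hnN
    have hk : kept n := hkeptN n (not_lt.mp hnN)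
    have h1 : Nat.count kept (n + 1) = Nat.count kept n + 1 := by
      rw [Nat.count_succ, if_pos hk]
    have h2 : Nat.count kept (n + 1) = Nat.count kept n := hn
    omega
  have hstut := stutter_of_count
    (interpRun V (fun p => I0 p) (fun ℓ => backStep (Φ (e ℓ))))
    ({n | Nat.count kept (n + 1) = Nat.count kept n}.ncard)
    (fun n => Nat.count kept n) (Nat.count_zero kept) hstepdisj hstallfin le_rfl
  have hfinal : interpRun (fun p s => V p (unSum s)) I Φ =
      fun n => interpRun V (fun p => I0 p) (fun ℓ => backStep (Φ (e ℓ))) (Nat.count kept n) := by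
    funext n p
    exact hcmain n p
  rw [hfinal]
  exact (P.stutterInv _ _ F hw0 hstut).mp hPF

end FDT
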